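/- In the universal enveloping algebra U(g) of the simple complex Lie algebra g of type D_ℓ (realized as so(2ℓ)), the element u = Σ_{i=2}^{ℓ} e_{ε_1−ε_i} e_{ε_1+ε_i} satisfies [e_α, u] = 0 for every simple root vector e_α (α ∈ {ε_1−ε_2, ..., ε_{ℓ-1}−ε_ℓ, ε_{ℓ-1}+ε_ℓ}), and [h, u] = 2ε_1(h)·u for all h in the Cartan subalgebra; i.e., u is a highest weight vector of weight 2ε_1 = 2ω_1 for the adjoint action of g on U(g). -/

import Mathlib

open Matrix Finset

attribute [local instance] LieRing.ofAssociativeRing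

/- We realize `g = so(2ℓ, ℂ)` of type `D_ℓ` inside the matrices indexed by `Fin ℓ ⊕ Fin ℓ`
(first block: basis vectors of weight `ε_i`, second block: weight `−ε_i`), with the Bourbaki
root vectors
`e_{ε_i−ε_j} = E_{i,j} − E_{j',i'}`, `e_{ε_i+ε_j} = E_{i,j'} − E_{j,i'}` (primes denote the
second block), and Cartan subalgebra the diagonal matrices `H(a) = diag(a, −a)`.
`U` is the universal enveloping algebra of the matrix Lie algebra (with commutator bracket);
the adjoint action of `X ∈ g` on `U(g)` is `X·f = Xf − fX`. -/

/-- elementary matrix -/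
noncomputable def Est (ℓ : ℕ) (a b : Fin ℓ ⊕ Fin ℓ) :
    Matrix (Fin ℓ ⊕ Fin ℓ) (Fin ℓ ⊕ Fin ℓ) ℂ :=
  Matrix.single a b 1

/-- root vector `e_{ε_i − ε_j}` (0-based indices) -/
noncomputable def eM (ℓ : ℕ) (i j : Fin ℓ) : Matrix (Fin ℓ ⊕ Fin ℓ) (Fin ℓ ⊕ Fin ℓ) ℂ :=
  Est ℓ (Sum.inl i) (Sum.inl j) - Est ℓ (Sum.inr j) (Sum.inr i)

/-- root vector `e_{ε_i + ε_j}` (0-based indices) -/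
noncomputable def eP (ℓ : ℕ) (i j : Fin ℓ) : Matrix (Fin ℓ ⊕ Fin ℓ) (Fin ℓ ⊕ Fin ℓ) ℂ :=
  Est ℓ (Sum.inl i) (Sum.inr j) - Est ℓ (Sum.inl j) (Sum.inr i)

/-- Cartan element `H(a) = diag(a_1, ..., a_ℓ, −a_1, ..., −a_ℓ)`; `ε_i(H(a)) = a_i`. -/
noncomputable def cart (ℓ : ℕ) (a : Fin ℓ → ℂ) :
    Matrix (Fin ℓ ⊕ Fin ℓ) (Fin ℓ ⊕ Fin ℓ) ℂ :=
  Matrix.diagonal (Sum.elim a (fun i => -a i))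

/-- the canonical embedding `g → U(g)` -/
noncomputable def ιU (ℓ : ℕ) :
    Matrix (Fin ℓ ⊕ Fin ℓ) (Fin ℓ ⊕ Fin ℓ) ℂ →ₗ⁅ℂ⁆
      UniversalEnvelopingAlgebra ℂ (Matrix (Fin ℓ ⊕ Fin ℓ) (Fin ℓ ⊕ Fin ℓ) ℂ) :=
  UniversalEnvelopingAlgebra.ι ℂ

/-- the element `u = Σ_{i=2}^{ℓ} e_{ε_1−ε_i} e_{ε_1+ε_i} ∈ U(g)` (0-based: `i ≠ 0`) -/
noncomputable def uElt (ℓ : ℕ) (hℓ : 3 ≤ ℓ) :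
    UniversalEnvelopingAlgebra ℂ (Matrix (Fin ℓ ⊕ Fin ℓ) (Fin ℓ ⊕ Fin ℓ) ℂ) :=
  ∑ i ∈ univ.filter (fun i : Fin ℓ => (i : ℕ) ≠ 0),
    ιU ℓ (eM ℓ ⟨0, by omega⟩ i) * ιU ℓ (eP ℓ ⟨0, by omega⟩ i)

section helpers

variable (ℓ : ℕ)

lemma Est_mul (a b c d : Fin ℓ ⊕ Fin ℓ) :
    Est ℓ a b * Est ℓ c d = if b = c then Est ℓ a d else 0 := by
  unfold Est
  split_ifs with h
  · subst h; rw [Matrix.single_mul_single_same, one_mul]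
  · exact Matrix.single_mul_single_of_ne 1 a b c h 1

lemma lie_eM_eM (p q r s : Fin ℓ) :
    ⁅eM ℓ p q, eM ℓ r s⁆ = (if q = r then eM ℓ p s else 0) - (if s = p then eM ℓ r q else 0) := by
  simp only [Ring.lie_def, eM, sub_mul, mul_sub, Est_mul]
  split_ifs with h1 h2 h2 <;>
    simp_all [Sum.inl.injEq, Sum.inr.injEq, eq_comm] <;> abel

lemma lie_eM_eP (p q r s : Fin ℓ) :
    ⁅eM ℓ p q, eP ℓ r s⁆ = (if q = r then eP ℓ p s else 0) - (if q = s then eP ℓ p r else 0) := by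
  simp only [Ring.lie_def, eM, eP, sub_mul, mul_sub, Est_mul]
  split_ifs with h1 h2 h2 <;>
    simp_all [Sum.inl.injEq, Sum.inr.injEq, eq_comm] <;> abel

lemma lie_eP_eP (p q r s : Fin ℓ) : ⁅eP ℓ p q, eP ℓ r s⁆ = 0 := by
  simp only [Ring.lie_def, eP, sub_mul, mul_sub, Est_mul]
  simp

lemma lie_eP_eM (p q r s : Fin ℓ) :
    ⁅eP ℓ p q, eM ℓ r s⁆ = (if s = q then eP ℓ r p else 0) - (if s = p then eP ℓ r q else 0) := by
  rw [← lie_skew, lie_eM_eP]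
  split_ifs <;> abel

lemma eP_symm (p q : Fin ℓ) : eP ℓ p q = -eP ℓ q p := by
  unfold eP; abel

lemma cart_mul_Est (a : Fin ℓ → ℂ) (x y : Fin ℓ ⊕ Fin ℓ) :
    cart ℓ a * Est ℓ x y = Sum.elim a (fun i => -a i) x • Est ℓ x y := by
  ext s t
  rw [Matrix.smul_apply, cart, Matrix.diagonal_mul]
  unfold Est
  by_cases h : x = s
  · subst h; simp [Matrix.single]
  · rw [Matrix.single_apply_of_row_ne h]; simp

lemma Est_mul_cart (a : Fin ℓ → ℂ) (x y : Fin ℓ ⊕ Fin ℓ) :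
    Est ℓ x y * cart ℓ a = Sum.elim a (fun i => -a i) y • Est ℓ x y := by
  ext s t
  rw [Matrix.smul_apply, cart, Matrix.mul_diagonal]
  unfold Est
  by_cases h : y = t
  · subst h; simp [Matrix.single, mul_comm]
  · rw [Matrix.single_apply_of_col_ne _ _ h]; simp

lemma lie_cart_eM (a : Fin ℓ → ℂ) (p q : Fin ℓ) :
    ⁅cart ℓ a, eM ℓ p q⁆ = (a p - a q) • eM ℓ p q := by
  simp only [Ring.lie_def, eM, mul_sub, sub_mul, cart_mul_Est, Est_mul_cart, Sum.elim_inl,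
    Sum.elim_inr, smul_sub, sub_smul]
  module

lemma lie_cart_eP (a : Fin ℓ → ℂ) (p q : Fin ℓ) :
    ⁅cart ℓ a, eP ℓ p q⁆ = (a p + a q) • eP ℓ p q := by
  simp only [Ring.lie_def, eP, mul_sub, sub_mul, cart_mul_Est, Est_mul_cart, Sum.elim_inl,
    Sum.elim_inr, smul_sub, add_smul]
  module

lemma iota_lie (X Y : Matrix (Fin ℓ ⊕ Fin ℓ) (Fin ℓ ⊕ Fin ℓ) ℂ) :
    ιU ℓ ⁅X, Y⁆ = ιU ℓ X * ιU ℓ Y - ιU ℓ Y * ιU ℓ X := by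
  rw [LieHom.map_lie]; rfl

lemma ad_mul (X A B : Matrix (Fin ℓ ⊕ Fin ℓ) (Fin ℓ ⊕ Fin ℓ) ℂ) :
    ιU ℓ X * (ιU ℓ A * ιU ℓ B) - (ιU ℓ A * ιU ℓ B) * ιU ℓ X
      = ιU ℓ ⁅X, A⁆ * ιU ℓ B + ιU ℓ A * ιU ℓ ⁅X, B⁆ := by
  rw [iota_lie, iota_lie]
  noncomm_ring

lemma adU (hℓ : 3 ≤ ℓ) (X : Matrix (Fin ℓ ⊕ Fin ℓ) (Fin ℓ ⊕ Fin ℓ) ℂ) :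
    ιU ℓ X * uElt ℓ hℓ - uElt ℓ hℓ * ιU ℓ X
      = ∑ i ∈ univ.filter (fun i : Fin ℓ => (i : ℕ) ≠ 0),
          (ιU ℓ ⁅X, eM ℓ ⟨0, by omega⟩ i⁆ * ιU ℓ (eP ℓ ⟨0, by omega⟩ i)
            + ιU ℓ (eM ℓ ⟨0, by omega⟩ i) * ιU ℓ ⁅X, eP ℓ ⟨0, by omega⟩ i⁆) := by
  unfold uElt
  rw [Finset.mul_sum, Finset.sum_mul, ← Finset.sum_sub_distrib]
  exact Finset.sum_congr rfl fun i _ => ad_mul ℓ X _ _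

end helpers

/-- In `U(g)` for `g` of type `D_ℓ`, the element
`u = Σ_{i=2}^{ℓ} e_{ε_1−ε_i} e_{ε_1+ε_i}` satisfies `[e_α, u] = 0` for every simple root vector
`e_α` (`α ∈ {ε_1−ε_2, ..., ε_{ℓ-1}−ε_ℓ, ε_{ℓ-1}+ε_ℓ}`) and `[H, u] = 2ε_1(H)·u` for every
Cartan element `H`; i.e. `u` is a highest weight vector of weight `2ε_1 = 2ω_1` for the adjoint
action of `g` on `U(g)`. -/


theorem stmt5_u_is_highest_weight_vector_of_weight_two_omega1
    (ℓ : ℕ) (hℓ : 3 ≤ ℓ) :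
    (∀ (j : ℕ) (hj : j + 1 < ℓ),
      ιU ℓ (eM ℓ ⟨j, by omega⟩ ⟨j + 1, hj⟩) * uElt ℓ hℓ
        - uElt ℓ hℓ * ιU ℓ (eM ℓ ⟨j, by omega⟩ ⟨j + 1, hj⟩) = 0) ∧
    (ιU ℓ (eP ℓ ⟨ℓ - 2, by omega⟩ ⟨ℓ - 1, by omega⟩) * uElt ℓ hℓ
        - uElt ℓ hℓ * ιU ℓ (eP ℓ ⟨ℓ - 2, by omega⟩ ⟨ℓ - 1, by omega⟩) = 0) ∧
    (∀ a : Fin ℓ → ℂ,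
      ιU ℓ (cart ℓ a) * uElt ℓ hℓ - uElt ℓ hℓ * ιU ℓ (cart ℓ a)
        = (2 * a ⟨0, by omega⟩) • uElt ℓ hℓ) := by
  have hz : (0 : ℕ) < ℓ := by omega
  refine ⟨?_, ?_, ?_⟩
  · -- simple roots e_{ε_j − ε_{j+1}}
    intro j hj
    rw [adU]
    set C := ιU ℓ (eM ℓ ⟨0, hz⟩ ⟨j + 1, hj⟩) * ιU ℓ (eP ℓ ⟨0, hz⟩ ⟨j, by omega⟩) with hC
    have hstep : ∀ i ∈ univ.filter (fun i : Fin ℓ => (i : ℕ) ≠ 0),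
        (ιU ℓ ⁅eM ℓ ⟨j, by omega⟩ ⟨j + 1, hj⟩, eM ℓ ⟨0, hz⟩ i⁆ * ιU ℓ (eP ℓ ⟨0, hz⟩ i)
          + ιU ℓ (eM ℓ ⟨0, hz⟩ i) * ιU ℓ ⁅eM ℓ ⟨j, by omega⟩ ⟨j + 1, hj⟩, eP ℓ ⟨0, hz⟩ i⁆)
        = (if i = (⟨j + 1, hj⟩ : Fin ℓ) then C else 0)
            - (if i = (⟨j, by omega⟩ : Fin ℓ) then C else 0) := by
      intro i hi
      rw [lie_eM_eM, lie_eM_eP]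
      have h1 : ((⟨j + 1, hj⟩ : Fin ℓ) = (⟨0, hz⟩ : Fin ℓ)) = False := by
        simp [Fin.ext_iff]
      rw [if_neg (by simp [Fin.ext_iff])]
      rw [if_neg (show ¬((⟨j + 1, hj⟩ : Fin ℓ) = (⟨0, hz⟩ : Fin ℓ)) by simp [Fin.ext_iff])]
      by_cases hij : i = (⟨j, by omega⟩ : Fin ℓ)
      · have hij1 : ¬(⟨j + 1, hj⟩ : Fin ℓ) = i := by
          subst hij; simp [Fin.ext_iff]
        have hij1 : i ≠ (⟨j + 1, hj⟩ : Fin ℓ) := by subst hij; simp [Fin.ext_iff]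
        rw [if_pos hij, if_neg (Ne.symm hij1), if_neg hij1, if_pos hij]
        subst hij
        simp [hC, map_zero, map_neg, map_sub, neg_mul]
      · by_cases hij1 : i = (⟨j + 1, hj⟩ : Fin ℓ)
        · rw [if_neg hij, if_pos hij1, if_pos hij1.symm]
          subst hij1
          rw [hC, eP_symm ℓ ⟨j, by omega⟩ ⟨0, hz⟩]
          simp [map_zero, map_neg, map_sub]
        · rw [if_neg hij, if_neg hij1, if_neg (Ne.symm hij1)]
          simp only [map_zero, sub_self, zero_mul, mul_zero, add_zero, zero_sub, sub_zero]
          rw [if_neg hij]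
          simp
    rw [Finset.sum_congr rfl hstep, Finset.sum_sub_distrib,
      Finset.sum_ite_eq' _ (⟨j + 1, hj⟩ : Fin ℓ), Finset.sum_ite_eq' _ (⟨j, by omega⟩ : Fin ℓ)]
    by_cases hj0 : j = 0
    · have hCz : C = 0 := by
        subst hj0
        have : eP ℓ ⟨0, hz⟩ ⟨0, by omega⟩ = 0 := by unfold eP; exact sub_self _
        rw [hC, this, map_zero, mul_zero]
      simp [hCz]
    · have h1 : (⟨j + 1, hj⟩ : Fin ℓ) ∈ univ.filter (fun i : Fin ℓ => (i : ℕ) ≠ 0) := by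
        simp
      have h2 : (⟨j, by omega⟩ : Fin ℓ) ∈ univ.filter (fun i : Fin ℓ => (i : ℕ) ≠ 0) := by
        simp [hj0]
      rw [if_pos h1, if_pos h2, sub_self]
  · -- the root e_{ε_{ℓ-1} + ε_ℓ}
    rw [adU]
    set p : Fin ℓ := ⟨ℓ - 2, by omega⟩ with hp
    set q : Fin ℓ := ⟨ℓ - 1, by omega⟩ with hq
    have hpq : p ≠ q := by simp [hp, hq, Fin.ext_iff]; omega
    set A := ιU ℓ (eP ℓ ⟨0, hz⟩ p) * ιU ℓ (eP ℓ ⟨0, hz⟩ q) with hA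
    set B := ιU ℓ (eP ℓ ⟨0, hz⟩ q) * ιU ℓ (eP ℓ ⟨0, hz⟩ p) with hB
    have hstep : ∀ i ∈ univ.filter (fun i : Fin ℓ => (i : ℕ) ≠ 0),
        (ιU ℓ ⁅eP ℓ p q, eM ℓ ⟨0, hz⟩ i⁆ * ιU ℓ (eP ℓ ⟨0, hz⟩ i)
          + ιU ℓ (eM ℓ ⟨0, hz⟩ i) * ιU ℓ ⁅eP ℓ p q, eP ℓ ⟨0, hz⟩ i⁆)
        = (if i = q then A else 0) - (if i = p then B else 0) := by
      intro i hi
      rw [lie_eP_eM, lie_eP_eP, map_zero, mul_zero, add_zero]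
      by_cases hiq : i = q
      · rw [if_pos hiq, if_neg (by rw [hiq]; exact (Ne.symm hpq)), if_pos hiq,
          if_neg (by rw [hiq]; exact fun h => hpq h.symm)]
        subst hiq
        simp [hA, map_zero, map_sub]
      · by_cases hip : i = p
        · rw [if_neg hiq, if_pos hip, if_pos hip, if_neg hiq]
          subst hip
          simp [hB, map_zero, map_neg, map_sub, neg_mul, zero_sub]
        · rw [if_neg hiq, if_neg hip, if_neg hiq, if_neg hip]
          simp [map_zero]
    rw [Finset.sum_congr rfl hstep, Finset.sum_sub_distrib,
      Finset.sum_ite_eq' _ q, Finset.sum_ite_eq' _ p]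
    have h1 : q ∈ univ.filter (fun i : Fin ℓ => (i : ℕ) ≠ 0) := by
      simp [hq]; omega
    have h2 : p ∈ univ.filter (fun i : Fin ℓ => (i : ℕ) ≠ 0) := by
      simp [hp]; omega
    rw [if_pos h1, if_pos h2]
    have : A - B = ιU ℓ ⁅eP ℓ ⟨0, hz⟩ p, eP ℓ ⟨0, hz⟩ q⁆ := by
      rw [iota_lie]
    rw [this, lie_eP_eP, map_zero]
  · -- Cartan elements
    intro a
    rw [adU]
    have hstep : ∀ i ∈ univ.filter (fun i : Fin ℓ => (i : ℕ) ≠ 0),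
        (ιU ℓ ⁅cart ℓ a, eM ℓ ⟨0, hz⟩ i⁆ * ιU ℓ (eP ℓ ⟨0, hz⟩ i)
          + ιU ℓ (eM ℓ ⟨0, hz⟩ i) * ιU ℓ ⁅cart ℓ a, eP ℓ ⟨0, hz⟩ i⁆)
        = (2 * a ⟨0, by omega⟩) • (ιU ℓ (eM ℓ ⟨0, hz⟩ i) * ιU ℓ (eP ℓ ⟨0, hz⟩ i)) := by
      intro i hi
      rw [lie_cart_eM, lie_cart_eP, map_smul, map_smul, smul_mul_assoc, mul_smul_comm,
        ← add_smul]
      congr 1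
      ring
    rw [Finset.sum_congr rfl hstep, ← Finset.smul_sum]
    rfl
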